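/- arXiv:1306.1076 — 5 statements merged into one kernel-verified Lean document; each statement's English description precedes it below -/
import Mathlib

section
/- Let λ ∈ (0,1)^V satisfy λ_i + λ_j < 1 for all edges (i,j) ∈ E. If each vertex i sets its transmission intensity to r_i = log( λ_i (1-λ_i)^{d(i)-1} / Π_{j∈N(i)} (1-λ_i-λ_j) ), then λ is a zero-gradient point of the Bethe free energy: ∇F_B(λ; r) = 0, i.e., ∂F_B/∂y_i evaluated at y = λ equals 0 for every i ∈ V. -/
private lemma aux_affine_mul_log (a s : ℝ) (h : a - s ≠ 0) :
    HasDerivAt (fun t => (a - t) * Real.log (a - t)) (-(Real.log (a - s) + 1)) s := by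
  have h1 : HasDerivAt (fun t : ℝ => a - t) (-1) s := by
    simpa using (hasDerivAt_id s).const_sub a
  have h2 : HasDerivAt (fun t => Real.log (a - t)) (-1 / (a - s)) s := by
    simpa using h1.log h
  have h3 := h1.fun_mul h2
  have hx : (a - s) * (-1 / (a - s)) = -1 := by
    rw [mul_div_assoc', mul_neg_one, neg_div, div_self h]
  exact h3.congr_deriv (by linarith [hx])

/-- BAS: if every vertex sets
`r_i = log( λ_i (1-λ_i)^{d(i)-1} / Π_{j∈N(i)} (1-λ_i-λ_j) )`,
then `λ` is a zero-gradient point of the Bethe free energy `F_B(·;r)`: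
every partial derivative of `F_B` at `λ` vanishes. -/
theorem bas_zero_gradient {V : Type*} [Fintype V] [DecidableEq V]
    (G : SimpleGraph V) [DecidableRel G.Adj]
    (lam : V → ℝ)
    (hl0 : ∀ i, 0 < lam i) (hl1 : ∀ i, lam i < 1)
    (hle : ∀ i j, G.Adj i j → lam i + lam j < 1)
    (r : V → ℝ)
    (hr : ∀ i, r i = Real.log
      (lam i * (1 - lam i) ^ (((G.neighborFinset i).card : ℝ) - 1) /
        ∏ j ∈ G.neighborFinset i, (1 - lam i - lam j)))
    (F : (V → ℝ) → ℝ)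
    (hF : F = fun z =>
      -(∑ i, z i * r i)
      - ∑ i, ((((G.neighborFinset i).card : ℝ) - 1) * (1 - z i) * Real.log (1 - z i)
              - z i * Real.log (z i))
      + (1 / 2) * ∑ i, ∑ j ∈ G.neighborFinset i,
          (1 - z i - z j) * Real.log (1 - z i - z j)) :
    ∀ i : V, HasDerivAt (fun t => F (Function.update lam i t)) 0 (lam i) := by
  subst hF
  intro i
  set d : ℝ := ((G.neighborFinset i).card : ℝ) with hd
  -- basic positivity facts
  have hi0 := hl0 i
  have hi1 : (0:ℝ) < 1 - lam i := by linarith [hl1 i]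
  have hNpos : ∀ k ∈ G.neighborFinset i, (0:ℝ) < 1 - lam i - lam k := by
    intro k hk
    have := hle i k ((SimpleGraph.mem_neighborFinset G i k).mp hk)
    linarith
  -- Piece A
  have hA : HasDerivAt (fun t => ∑ j, Function.update lam i t j * r j) (r i) (lam i) := by
    have h : HasDerivAt (fun t => ∑ j, Function.update lam i t j * r j)
        (∑ j, if j = i then r j else 0) (lam i) := by
      apply HasDerivAt.fun_sum
      intro j _
      by_cases hj : j = i
      · have : (fun t => Function.update lam i t j * r j) = fun t => t * r j := by
          funext t; rw [hj, Function.update_self]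
        rw [this, if_pos hj, hj]
        simpa using (hasDerivAt_id (lam i)).mul_const (r i)
      · have : (fun t => Function.update lam i t j * r j) = fun _ => lam j * r j := by
          funext t; rw [Function.update_of_ne hj]
        rw [this, if_neg hj]
        exact hasDerivAt_const _ _
    simpa using h
  -- Piece B
  have hB : HasDerivAt
      (fun t => ∑ j, ((((G.neighborFinset j).card : ℝ) - 1) *
          (1 - Function.update lam i t j) * Real.log (1 - Function.update lam i t j)
          - Function.update lam i t j * Real.log (Function.update lam i t j)))
      ((d - 1) * (-(Real.log (1 - lam i) + 1)) - (Real.log (lam i) + 1)) (lam i) := by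
    have h : HasDerivAt (fun t => ∑ j, ((((G.neighborFinset j).card : ℝ) - 1) *
          (1 - Function.update lam i t j) * Real.log (1 - Function.update lam i t j)
          - Function.update lam i t j * Real.log (Function.update lam i t j)))
        (∑ j, if j = i then
            (d - 1) * (-(Real.log (1 - lam i) + 1)) - (Real.log (lam i) + 1) else 0)
        (lam i) := by
      apply HasDerivAt.fun_sum
      intro j _
      by_cases hj : j = i
      · subst hj
        rw [if_pos rfl]
        have hfun : (fun t => (((G.neighborFinset j).card : ℝ) - 1) *
            (1 - Function.update lam j t j) * Real.log (1 - Function.update lam j t j)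
            - Function.update lam j t j * Real.log (Function.update lam j t j))
            = fun t => (d - 1) * ((1 - t) * Real.log (1 - t)) - t * Real.log t := by
          funext t; rw [Function.update_self]; ring
        rw [hfun]
        have h1 : HasDerivAt (fun t : ℝ => (1 - t) * Real.log (1 - t))
            (-(Real.log (1 - lam j) + 1)) (lam j) :=
          aux_affine_mul_log 1 (lam j) (by linarith)
        exact (h1.const_mul (d - 1)).sub (Real.hasDerivAt_mul_log (ne_of_gt hi0))
      · have hfun : (fun t => (((G.neighborFinset j).card : ℝ) - 1) *
            (1 - Function.update lam i t j) * Real.log (1 - Function.update lam i t j)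
            - Function.update lam i t j * Real.log (Function.update lam i t j))
            = fun _ => (((G.neighborFinset j).card : ℝ) - 1) *
            (1 - lam j) * Real.log (1 - lam j) - lam j * Real.log (lam j) := by
          funext t; rw [Function.update_of_ne hj]
        rw [hfun, if_neg hj]
        exact hasDerivAt_const _ _
    simpa using h
  -- Piece C : the double sum
  set δ : V → V → ℝ := fun j k =>
    if j = i then -(Real.log (1 - lam i - lam k) + 1)
    else if k = i then -(Real.log (1 - lam j - lam i) + 1) else 0 with hδ
  have hC : HasDerivAt
      (fun t => ∑ j, ∑ k ∈ G.neighborFinset j,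
        (1 - Function.update lam i t j - Function.update lam i t k) *
          Real.log (1 - Function.update lam i t j - Function.update lam i t k))
      (∑ j, ∑ k ∈ G.neighborFinset j, δ j k) (lam i) := by
    apply HasDerivAt.fun_sum
    intro j _
    apply HasDerivAt.fun_sum
    intro k hk
    have hadjjk : G.Adj j k := (SimpleGraph.mem_neighborFinset G j k).mp hk
    by_cases hj : j = i
    · subst hj
      have hki : k ≠ j := fun h => G.irrefl (h ▸ hadjjk)
      have hfun : (fun t => (1 - Function.update lam j t j - Function.update lam j t k) *
          Real.log (1 - Function.update lam j t j - Function.update lam j t k))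
          = fun t => ((1 - lam k) - t) * Real.log ((1 - lam k) - t) := by
        funext t
        rw [Function.update_self, Function.update_of_ne hki]
        ring_nf
      have hne : (1 - lam k) - lam j ≠ 0 := by
        have := hle j k hadjjk; intro h; rw [sub_sub] at h; linarith
      have harg : (1:ℝ) - lam j - lam k = (1 - lam k) - lam j := by ring
      have hval : δ j k = -(Real.log ((1 - lam k) - lam j) + 1) := by
        simp [hδ, harg]
      rw [hfun, hval]
      exact aux_affine_mul_log (1 - lam k) (lam j) hne
    · by_cases hk' : k = i
      · subst hk'
        have hfun : (fun t => (1 - Function.update lam k t j - Function.update lam k t k) *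
            Real.log (1 - Function.update lam k t j - Function.update lam k t k))
            = fun t => ((1 - lam j) - t) * Real.log ((1 - lam j) - t) := by
          funext t
          rw [Function.update_self, Function.update_of_ne hj]
        have hne : (1 - lam j) - lam k ≠ 0 := by
          have := hle j k hadjjk; intro h; rw [sub_sub] at h; linarith
        have harg : (1:ℝ) - lam j - lam k = (1 - lam j) - lam k := by ring
        have hval : δ j k = -(Real.log ((1 - lam j) - lam k) + 1) := by
          simp [hδ, hj, harg]
        rw [hfun, hval]
        exact aux_affine_mul_log (1 - lam j) (lam k) hne
      · have hfun : (fun t => (1 - Function.update lam i t j - Function.update lam i t k) *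
            Real.log (1 - Function.update lam i t j - Function.update lam i t k))
            = fun _ => (1 - lam j - lam k) * Real.log (1 - lam j - lam k) := by
          funext t
          rw [Function.update_of_ne hj, Function.update_of_ne hk']
        have hval : δ j k = 0 := by simp [hδ, hj, hk']
        rw [hfun, hval]
        exact hasDerivAt_const _ _
  -- assemble
  have hD : HasDerivAt (fun t => (fun z : V → ℝ =>
      -(∑ i, z i * r i)
      - ∑ i, ((((G.neighborFinset i).card : ℝ) - 1) * (1 - z i) * Real.log (1 - z i)
              - z i * Real.log (z i))
      + (1 / 2) * ∑ i, ∑ j ∈ G.neighborFinset i,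
          (1 - z i - z j) * Real.log (1 - z i - z j)) (Function.update lam i t))
      (-(r i) - ((d - 1) * (-(Real.log (1 - lam i) + 1)) - (Real.log (lam i) + 1))
        + (1 / 2) * (∑ j, ∑ k ∈ G.neighborFinset j, δ j k)) (lam i) :=
    (hA.neg.sub hB).add (hC.const_mul (1 / 2))
  -- evaluate the sum of δ's
  have hsumδ : (∑ j, ∑ k ∈ G.neighborFinset j, δ j k)
      = 2 * ∑ k ∈ G.neighborFinset i, -(Real.log (1 - lam i - lam k) + 1) := by
    rw [← Finset.sum_erase_add _ _ (Finset.mem_univ i)]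
    have hii : i ∉ G.neighborFinset i := by simp
    have h1 : ∑ k ∈ G.neighborFinset i, δ i k
        = ∑ k ∈ G.neighborFinset i, -(Real.log (1 - lam i - lam k) + 1) := by
      apply Finset.sum_congr rfl; intro k _; rw [hδ]; simp
    have h2 : ∑ j ∈ Finset.univ.erase i, ∑ k ∈ G.neighborFinset j, δ j k
        = ∑ k ∈ G.neighborFinset i, -(Real.log (1 - lam i - lam k) + 1) := by
      have step1 : ∀ j ∈ Finset.univ.erase i, (∑ k ∈ G.neighborFinset j, δ j k)
          = if i ∈ G.neighborFinset j then -(Real.log (1 - lam j - lam i) + 1) else 0 := by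
        intro j hj
        have hjne : j ≠ i := (Finset.mem_erase.mp hj).1
        have : ∀ k ∈ G.neighborFinset j, δ j k
            = if k = i then -(Real.log (1 - lam j - lam i) + 1) else 0 := by
          intro k _
          by_cases hk' : k = i <;> simp [hδ, hjne, hk']
        rw [Finset.sum_congr rfl this]
        exact Finset.sum_ite_eq' _ i _
      rw [Finset.sum_congr rfl step1]
      have step2 : ∀ j : V, (i ∈ G.neighborFinset j) ↔ (j ∈ G.neighborFinset i) := by
        intro j
        simp [SimpleGraph.mem_neighborFinset, SimpleGraph.adj_comm]
      have hzero' : (if i ∈ G.neighborFinset i then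
          -(Real.log (1 - lam i - lam i) + 1) else 0) = 0 := by
        simp [SimpleGraph.irrefl]
      rw [Finset.sum_erase (f := fun j => if i ∈ G.neighborFinset j
          then -(Real.log (1 - lam j - lam i) + 1) else 0) _ hzero']
      have step3 : (∑ j, if i ∈ G.neighborFinset j
            then -(Real.log (1 - lam j - lam i) + 1) else 0)
          = ∑ j, if j ∈ G.neighborFinset i
            then -(Real.log (1 - lam j - lam i) + 1) else 0 :=
        Finset.sum_congr rfl fun j _ => if_congr (step2 j) rfl rfl
      rw [step3, Finset.sum_ite_mem, Finset.univ_inter]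
      apply Finset.sum_congr rfl
      intro k _
      rw [show (1:ℝ) - lam k - lam i = 1 - lam i - lam k from by ring]
    rw [h1, h2]; ring
  -- compute r i expansion
  have hppos : ∀ k ∈ G.neighborFinset i, (0:ℝ) < 1 - lam i - lam k := hNpos
  have hprodpos : (0:ℝ) < ∏ k ∈ G.neighborFinset i, (1 - lam i - lam k) :=
    Finset.prod_pos hppos
  have hrpowpos : (0:ℝ) < (1 - lam i) ^ (d - 1) := Real.rpow_pos_of_pos hi1 _
  have hri : r i = Real.log (lam i) + (d - 1) * Real.log (1 - lam i)
      - ∑ k ∈ G.neighborFinset i, Real.log (1 - lam i - lam k) := by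
    rw [hr i, Real.log_div (by positivity) (ne_of_gt hprodpos),
      Real.log_mul (ne_of_gt hi0) (ne_of_gt hrpowpos),
      Real.log_rpow hi1,
      Real.log_prod (fun k hk => ne_of_gt (hppos k hk))]
  -- final: the derivative value is zero
  have hzero : (-(r i) - ((d - 1) * (-(Real.log (1 - lam i) + 1)) - (Real.log (lam i) + 1))
        + (1 / 2) * (∑ j, ∑ k ∈ G.neighborFinset j, δ j k)) = 0 := by
    rw [hsumδ, hri]
    have hs : ∑ k ∈ G.neighborFinset i, -(Real.log (1 - lam i - lam k) + 1)
        = -(∑ k ∈ G.neighborFinset i, Real.log (1 - lam i - lam k)) - d := by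
      rw [Finset.sum_neg_distrib, Finset.sum_add_distrib, Finset.sum_const, nsmul_eq_mul,
        mul_one, hd]
      ring
    rw [hs]
    ring
  rw [← hzero]
  exact hD
end

section
/- For any probability distribution ν on I(G) supported on independent sets, the Bethe free energy can be written purely in terms of the first-order marginals y_i = P_ν(σ_i = 1): F_B(ν; r) = -Σ_i y_i r_i - Σ_i[(d(i)-1)(1-y_i)log(1-y_i) - y_i log y_i] + Σ_{(i,j)∈E}(1-y_i-y_j)log(1-y_i-y_j), where F_B(ν;r) = -E_ν[r·σ] - Σ_i H(σ_i) + Σ_{(i,j)∈E} I(σ_i;σ_j). -/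
/-- for a distribution `ν` supported on the independent sets of
`G`, the Bethe free energy `F_B(ν;r) = -E_ν[r·σ] - Σ_i H(σ_i) + Σ_E I(σ_i;σ_j)`
is a function of the first-order marginals `y_i = P_ν(σ_i = 1)` only:
`F_B = -Σ_i y_i r_i - Σ_i[(d(i)-1)(1-y_i)log(1-y_i) - y_i log y_i]
       + Σ_{(i,j)∈E}(1-y_i-y_j)log(1-y_i-y_j)`
(edge sums written as half the sum over ordered adjacent pairs). -/
theorem bethe_free_energy_via_marginals {V : Type*} [Fintype V] [DecidableEq V]
    (G : SimpleGraph V) [DecidableRel G.Adj]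
    (S : Finset (V → Bool))
    (hS : ∀ σ : V → Bool, σ ∈ S ↔ ∀ i j : V, G.Adj i j → ¬(σ i = true ∧ σ j = true))
    (ν : (V → Bool) → ℝ)
    (hν0 : ∀ σ ∈ S, 0 ≤ ν σ) (hν1 : ∑ σ ∈ S, ν σ = 1)
    (r : V → ℝ)
    (y : V → ℝ) (hy : ∀ i, y i = ∑ σ ∈ S, if σ i = true then ν σ else 0)
    (hy0 : ∀ i, 0 < y i) (hy1 : ∀ i, y i < 1)
    (hye : ∀ i j, G.Adj i j → y i + y j < 1)
    (H1 : V → ℝ)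
    (hH1 : ∀ i, H1 i = -(y i * Real.log (y i)) - (1 - y i) * Real.log (1 - y i))
    (p2 : V → V → Bool → Bool → ℝ)
    (hp2 : ∀ i j a b, p2 i j a b = ∑ σ ∈ S, if σ i = a ∧ σ j = b then ν σ else 0)
    (H2 : V → V → ℝ)
    (hH2 : ∀ i j, H2 i j = -∑ a : Bool, ∑ b : Bool, p2 i j a b * Real.log (p2 i j a b))
    (I : V → V → ℝ) (hI : ∀ i j, I i j = H1 i + H1 j - H2 i j)
    (FB : ℝ)
    (hFB : FB = -(∑ σ ∈ S, ν σ * ∑ i, if σ i then r i else 0)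
      - ∑ i, H1 i + (1 / 2) * ∑ i, ∑ j ∈ G.neighborFinset i, I i j) :
    FB = -(∑ i, y i * r i)
      - ∑ i, ((((G.neighborFinset i).card : ℝ) - 1) * (1 - y i) * Real.log (1 - y i)
              - y i * Real.log (y i))
      + (1 / 2) * ∑ i, ∑ j ∈ G.neighborFinset i,
          (1 - y i - y j) * Real.log (1 - y i - y j) := by
  -- abbreviations
  set A : V → ℝ := fun i => (1 - y i) * Real.log (1 - y i) with hA
  -- expectation identity
  have hExp : ∑ σ ∈ S, ν σ * ∑ i, (if σ i then r i else 0) = ∑ i, y i * r i := by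
    simp_rw [Finset.mul_sum]
    rw [Finset.sum_comm]
    refine Finset.sum_congr rfl fun i _ => ?_
    rw [hy, Finset.sum_mul]
    refine Finset.sum_congr rfl fun σ _ => ?_
    by_cases h : σ i = true <;> simp [h]
  -- mutual information on edges
  have hIadj : ∀ i j, G.Adj i j → I i j =
      -A i - A j + (1 - y i - y j) * Real.log (1 - y i - y j) := by
    intro i j hadj
    have hind : ∀ σ ∈ S, ¬(σ i = true ∧ σ j = true) := fun σ hσ => (hS σ).1 hσ i j hadj
    have hp_tt : p2 i j true true = 0 := by
      rw [hp2]
      refine Finset.sum_eq_zero fun σ hσ => ?_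
      simp only [ite_eq_right_iff]
      exact fun h => absurd h (hind σ hσ)
    have hp_tf : p2 i j true false = y i := by
      rw [hp2, hy]
      refine Finset.sum_congr rfl fun σ hσ => ?_
      by_cases h : σ i = true
      · have hj : σ j = false := by
          cases hjv : σ j
          · rfl
          · exact absurd ⟨h, hjv⟩ (hind σ hσ)
        simp [h, hj]
      · simp [h]
    have hp_ft : p2 i j false true = y j := by
      rw [hp2, hy]
      refine Finset.sum_congr rfl fun σ hσ => ?_
      by_cases h : σ j = true
      · have hi' : σ i = false := by
          cases hiv : σ i
          · rfl
          · exact absurd ⟨hiv, h⟩ (hind σ hσ)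
        simp [h, hi']
      · simp [h]
    have hp_ff : p2 i j false false = 1 - y i - y j := by
      rw [hp2, hy, hy, ← hν1, ← Finset.sum_sub_distrib, ← Finset.sum_sub_distrib]
      refine Finset.sum_congr rfl fun σ hσ => ?_
      cases hi' : σ i <;> cases hj : σ j <;> simp [hi', hj]
      exact absurd ⟨hi', hj⟩ (hind σ hσ)
    rw [hI, hH2, hH1, hH1, Fintype.sum_bool]
    simp only [Fintype.sum_bool, hp_tt, hp_tf, hp_ft, hp_ff, Real.log_zero, mul_zero, zero_mul]
    ring
  -- symmetry of edge sums
  have hswap : ∑ i, ∑ j ∈ G.neighborFinset i, A j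
      = ∑ i, ((G.neighborFinset i).card : ℝ) * A i := by
    simp_rw [SimpleGraph.neighborFinset_eq_filter, Finset.sum_filter]
    rw [Finset.sum_comm]
    refine Finset.sum_congr rfl fun j _ => ?_
    rw [show ∑ i : V, (if G.Adj i j then A j else 0)
        = ∑ i : V, (if G.Adj j i then A j else 0) from
      Finset.sum_congr rfl fun i _ => if_congr (G.adj_comm i j) rfl rfl]
    rw [← Finset.sum_filter, Finset.sum_const, nsmul_eq_mul]
  -- inner sum rewrite
  have hinner : ∀ i : V, ∑ j ∈ G.neighborFinset i, I i j
      = -(((G.neighborFinset i).card : ℝ) * A i) - (∑ j ∈ G.neighborFinset i, A j)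
        + ∑ j ∈ G.neighborFinset i, (1 - y i - y j) * Real.log (1 - y i - y j) := by
    intro i
    rw [show ∑ j ∈ G.neighborFinset i, I i j
        = ∑ j ∈ G.neighborFinset i,
            (-A i - A j + (1 - y i - y j) * Real.log (1 - y i - y j)) from
      Finset.sum_congr rfl fun j hj =>
        hIadj i j ((SimpleGraph.mem_neighborFinset G i j).1 hj)]
    rw [Finset.sum_add_distrib, Finset.sum_sub_distrib, Finset.sum_const, nsmul_eq_mul]
    ring
  rw [hFB, hExp]
  simp_rw [hinner]
  rw [Finset.sum_add_distrib, Finset.sum_sub_distrib, hswap]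
  have key : ∑ i, H1 i + ∑ i, ((G.neighborFinset i).card : ℝ) * A i
      = ∑ i, ((((G.neighborFinset i).card : ℝ) - 1) * (1 - y i) * Real.log (1 - y i)
              - y i * Real.log (y i)) := by
    rw [← Finset.sum_add_distrib]
    refine Finset.sum_congr rfl fun i _ => ?_
    rw [hH1, hA]
    ring
  have hnegsum : ∑ i, -(((G.neighborFinset i).card : ℝ) * A i)
      = -∑ i, ((G.neighborFinset i).card : ℝ) * A i := by
    rw [Finset.sum_neg_distrib]
  rw [hnegsum]
  linarith [key]
end

section
/- Fix α > 0, β > 0, and y in the domain D with y_i ≥ δ₁ for all i, where D requires y_i + y_j ≤ 1 for edges. If y_i ≥ 1 - 2ε₂ with ε₂ = 1/(2(exp(β·2^α)+1)), then the partial derivative of K_B at y in coordinate i is negative: ∂K_B/∂y_i = β y_i^{-α} - (d(i)-1)log(1-y_i) - log y_i + Σ_{j∈N(i)} log(1-y_i-y_j) < 0. -/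
/-- if `y_i ≥ 1 - 2ε₂` with `ε₂ = 1/(2(exp(β·2^α)+1))`, then
`∂K_B/∂y_i = β y_i^{-α} - (d(i)-1)log(1-y_i) - log y_i
             + Σ_{j∈N(i)} log(1-y_i-y_j) < 0`. -/
theorem KB_partial_neg_near_one {V : Type*} [Fintype V] [DecidableEq V]
    (G : SimpleGraph V) [DecidableRel G.Adj]
    (α β : ℝ) (hα : 0 < α) (hβ : 0 < β)
    (ε₂ : ℝ) (hε₂ : ε₂ = 1 / (2 * (Real.exp (β * (2 : ℝ) ^ α) + 1)))
    (δ₁ : ℝ) (hδ₁ : 0 < δ₁)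
    (y : V → ℝ) (hyδ : ∀ k, δ₁ ≤ y k)
    (i : V) (hyi1 : y i < 1)
    (hyj : ∀ j ∈ G.neighborFinset i, 0 < y j ∧ y i + y j < 1)
    (hbig : 1 - 2 * ε₂ ≤ y i) :
    β * y i ^ (-α) - (((G.neighborFinset i).card : ℝ) - 1) * Real.log (1 - y i)
      - Real.log (y i)
      + ∑ j ∈ G.neighborFinset i, Real.log (1 - y i - y j) < 0 := by
  set E := Real.exp (β * (2 : ℝ) ^ α) with hE
  have hEpos : (0 : ℝ) < E := Real.exp_pos _
  have hE1 : (1 : ℝ) < E := by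
    rw [hE, ← Real.exp_zero]
    exact Real.exp_lt_exp.mpr (by positivity)
  have h2ε : 2 * ε₂ = 1 / (E + 1) := by rw [hε₂]; field_simp
  have hyi_half : (1 : ℝ) / 2 < y i := by
    have : 1 / (E + 1) < 1 / 2 := by
      apply one_div_lt_one_div_of_lt <;> linarith
    linarith
  have hyipos : 0 < y i := by linarith
  have h1y : 0 < 1 - y i := by linarith
  -- sum bound
  have hsum : ∑ j ∈ G.neighborFinset i, Real.log (1 - y i - y j)
      ≤ ((G.neighborFinset i).card : ℝ) * Real.log (1 - y i) := by
    have := Finset.sum_le_card_nsmul (G.neighborFinset i)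
      (fun j => Real.log (1 - y i - y j)) (Real.log (1 - y i)) ?_
    · simpa [nsmul_eq_mul] using this
    · intro j hj
      obtain ⟨hj0, hj1⟩ := hyj j hj
      exact Real.log_le_log (by linarith) (by linarith)
  -- first term bound: y i ^ (-α) < 2 ^ α
  have hterm1 : y i ^ (-α) < (2 : ℝ) ^ α := by
    have h1 : ((1 : ℝ) / 2) ^ α < y i ^ α :=
      Real.rpow_lt_rpow (by norm_num) hyi_half hα
    have h2 : ((1 : ℝ) / 2) ^ α = ((2 : ℝ) ^ α)⁻¹ := by
      rw [one_div, Real.inv_rpow (by norm_num)]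
    have hy2 : y i ^ (-α) = (y i ^ α)⁻¹ := Real.rpow_neg hyipos.le α
    rw [hy2, ← inv_inv ((2:ℝ)^α), ← h2]
    exact inv_strictAnti₀ (by positivity) h1
  -- log bound: β * 2 ^ α ≤ log (y i) - log (1 - y i)
  have hterm2 : β * (2 : ℝ) ^ α ≤ Real.log (y i) - Real.log (1 - y i) := by
    rw [← Real.log_div (ne_of_gt hyipos) (ne_of_gt h1y)]
    rw [Real.le_log_iff_exp_le (by positivity)]
    rw [← hE, le_div_iff₀ h1y]
    have : E * (1 - y i) ≤ E * (1 / (E + 1)) := by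
      apply mul_le_mul_of_nonneg_left _ hEpos.le
      linarith
    have hq : E * (1 / (E + 1)) = 1 - 1 / (E + 1) := by
      field_simp
      ring
    linarith
  have hβterm : β * y i ^ (-α) < β * (2:ℝ) ^ α :=
    mul_lt_mul_of_pos_left hterm1 hβ
  nlinarith [hsum, hterm2, hβterm]
end

section
/- Fix α > 0, β > 0 with β y_i^{-α} ≥ 1, and suppose y is in the domain with 1 - y_i - y_j ≥ δ₂ for all j ∈ N(i), maximum degree d. Let ε₁ = β 2^α δ₂^d / (4(1+β 2^α d δ₂^{d-1})). If y_i ≤ 2ε₁ and y_i ≤ 1/2, then ∂K_B/∂y_i = β y_i^{-α} - (d(i)-1)log(1-y_i) - log y_i + Σ_{j∈N(i)} log(1-y_i-y_j) > 0. -/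
/-- with `ε₁ = β 2^α δ₂^d / (4(1 + β 2^α d δ₂^{d-1}))`, if
`β y_i^{-α} ≥ 1`, `1 - y_i - y_j ≥ δ₂` for all neighbors `j`, `y_i ≤ 2ε₁`
and `y_i ≤ 1/2`, then
`∂K_B/∂y_i = β y_i^{-α} - (d(i)-1)log(1-y_i) - log y_i
             + Σ_{j∈N(i)} log(1-y_i-y_j) > 0`. -/
theorem KB_partial_pos_near_zero {V : Type*} [Fintype V] [DecidableEq V]
    (G : SimpleGraph V) [DecidableRel G.Adj]
    (α β : ℝ) (hα : 0 < α) (hβ : 0 < β)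
    (d : ℕ) (hd : ∀ k : V, (G.neighborFinset k).card ≤ d)
    (δ₂ : ℝ) (hδ₂ : 0 < δ₂)
    (ε₁ : ℝ)
    (hε₁ : ε₁ = β * (2 : ℝ) ^ α * δ₂ ^ (d : ℝ) /
      (4 * (1 + β * (2 : ℝ) ^ α * (d : ℝ) * δ₂ ^ ((d : ℝ) - 1))))
    (y : V → ℝ) (i : V)
    (hyi0 : 0 < y i)
    (hpow : 1 ≤ β * y i ^ (-α))
    (hnbr : ∀ j ∈ G.neighborFinset i, 0 < y j ∧ δ₂ ≤ 1 - y i - y j)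
    (hyi : y i ≤ 2 * ε₁) (hhalf : y i ≤ 1 / 2) :
    0 < β * y i ^ (-α) - (((G.neighborFinset i).card : ℝ) - 1) * Real.log (1 - y i)
      - Real.log (y i)
      + ∑ j ∈ G.neighborFinset i, Real.log (1 - y i - y j) := by
  have hy2 : 0 < 1 - y i := by linarith
  by_cases hD0 : (G.neighborFinset i).card = 0
  · have hemp : G.neighborFinset i = ∅ := Finset.card_eq_zero.mp hD0
    rw [hemp]
    simp only [Finset.sum_empty, Finset.card_empty, Nat.cast_zero]
    have h1 : Real.log (y i) ≤ Real.log (1 - y i) := by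
      apply Real.log_le_log hyi0; linarith
    linarith
  · -- main case: at least one neighbor
    obtain ⟨j₀, hj₀⟩ := Finset.card_pos.mp (Nat.pos_of_ne_zero hD0)
    have hδlt1 : δ₂ < 1 := by
      have := (hnbr j₀ hj₀).2
      have := (hnbr j₀ hj₀).1
      linarith
    set A : ℝ := β * (2 : ℝ) ^ α with hA
    set B : ℝ := 1 + β * (2 : ℝ) ^ α * (d : ℝ) * δ₂ ^ ((d : ℝ) - 1) with hB
    have hA0 : 0 < A := by positivity
    have hB1 : 1 ≤ B := by
      have : 0 ≤ β * (2 : ℝ) ^ α * (d : ℝ) * δ₂ ^ ((d : ℝ) - 1) := by positivity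
      simp only [hB]; linarith
    have hB0 : 0 < B := by linarith
    have hd1 : 1 ≤ d := le_trans (Nat.pos_of_ne_zero hD0) (hd i)
    -- lower bound for the sum
    have hsum : ((G.neighborFinset i).card : ℝ) • Real.log δ₂ ≤
        ∑ j ∈ G.neighborFinset i, Real.log (1 - y i - y j) := by
      have := Finset.card_nsmul_le_sum (G.neighborFinset i)
        (fun j => Real.log (1 - y i - y j)) (Real.log δ₂)
        (fun j hj => Real.log_le_log hδ₂ (hnbr j hj).2)
      simpa using this
    rw [smul_eq_mul] at hsum
    have hlogδ : Real.log δ₂ ≤ 0 := Real.log_nonpos (le_of_lt hδ₂) (le_of_lt hδlt1)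
    have hDd : ((G.neighborFinset i).card : ℝ) ≤ (d : ℝ) := by
      exact_mod_cast hd i
    have hsum' : (d : ℝ) * Real.log δ₂ ≤
        ∑ j ∈ G.neighborFinset i, Real.log (1 - y i - y j) := by
      nlinarith [hsum]
    -- the (D-1) log(1-y) term is ≤ 0
    have hD1 : (1 : ℝ) ≤ ((G.neighborFinset i).card : ℝ) := by
      exact_mod_cast Nat.pos_of_ne_zero hD0
    have hlog1y : Real.log (1 - y i) ≤ 0 := Real.log_nonpos (by linarith) (by linarith)
    have hterm2 : 0 ≤ -((((G.neighborFinset i).card : ℝ) - 1) * Real.log (1 - y i)) := by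
      nlinarith
    -- β y^{-α} ≥ A
    have hpowy : A ≤ β * y i ^ (-α) := by
      have h1 : ((1 : ℝ)/2) ^ (-α) ≤ y i ^ (-α) := by
        apply Real.rpow_le_rpow_of_nonpos hyi0 hhalf (by linarith)
      have h2 : ((1 : ℝ)/2) ^ (-α) = (2 : ℝ) ^ α := by
        rw [one_div, Real.inv_rpow (by norm_num : (0:ℝ) ≤ 2), Real.rpow_neg (by norm_num), inv_inv]
      rw [h2] at h1
      have := mul_le_mul_of_nonneg_left h1 (le_of_lt hβ)
      simpa [hA] using this
    -- ε₁ positivity and log bound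
    have h2ε : 2 * ε₁ = (A / (2 * B)) * δ₂ ^ (d : ℝ) := by
      rw [hε₁, hA, hB]; field_simp; ring
    have hδd : 0 < δ₂ ^ (d : ℝ) := Real.rpow_pos_of_pos hδ₂ _
    have hε0 : 0 < 2 * ε₁ := by
      rw [h2ε]; positivity
    have hlogy : Real.log (y i) ≤ Real.log (2 * ε₁) := Real.log_le_log hyi0 hyi
    have hlog2ε : Real.log (2 * ε₁) = Real.log (A / (2 * B)) + (d : ℝ) * Real.log δ₂ := by
      rw [h2ε, Real.log_mul (by positivity) (by positivity), Real.log_rpow hδ₂]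
    have hfrac : 0 < A / (2 * B) := by positivity
    have hfrac2 : A / (2 * B) ≤ A / 2 := by
      apply div_le_div_of_nonneg_left (le_of_lt hA0) (by norm_num : (0:ℝ) < 2) (by linarith)
    have hlogfrac : Real.log (A / (2 * B)) ≤ A / (2 * B) - 1 :=
      Real.log_le_sub_one_of_pos hfrac
    linarith
end

section
/- Suppose the weights μ(t) = t^{-1/2} / Σ_{s=1}^T s^{-1/2} for t = 1,…,T, and suppose per-step bounds (1/√t)(K_B(y*) - K_B(y(t))) ≤ ½(a_t - a_{t+1} + C n / t) hold for t ≥ t_δ (telescoping a_t = ‖y(t)-y*‖² with 0 ≤ a_t ≤ Cn), and K_B(y*) - K_B(y(t)) ≤ C n for t < t_δ. Then Σ_{t=1}^T μ(t)(K_B(y*) - K_B(y(t))) ≤ C'·(n log T)/√T for a constant C' depending only on C and t_δ. -/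
lemma harm_le (T : ℕ) : ∑ t ∈ Finset.Icc 1 T, (1:ℝ)/t ≤ 1 + Real.log T := by
  have h := harmonic_le_one_add_log T
  have he : ((harmonic T : ℚ) : ℝ) = ∑ t ∈ Finset.Icc 1 T, (1:ℝ)/t := by
    simp_rw [harmonic_eq_sum_Icc, Rat.cast_sum, Rat.cast_inv, Rat.cast_natCast, one_div]
  linarith [he ▸ h]

lemma rpow_neg_half (t : ℕ) : (t:ℝ) ^ (-(1:ℝ)/2) = 1 / Real.sqrt t := by
  rw [neg_div, Real.rpow_neg (Nat.cast_nonneg t), ← Real.sqrt_eq_rpow, one_div]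

/-- weighted-average convergence bound.  With weights
`μ(t) = t^{-1/2} / Σ_{s=1}^T s^{-1/2}`, per-step telescoping bounds
`(1/√t)·Δ(t) ≤ ½(a(t) - a(t+1) + Cn/t)` for `t ≥ t_δ`, `0 ≤ a(t) ≤ Cn`,
and `Δ(t) ≤ Cn` for `t < t_δ`, there is a constant `C'` depending only on `C`
and `t_δ` such that `Σ_{t=1}^T μ(t)Δ(t) ≤ C'·n·log T/√T`. -/
theorem weighted_gap_bound (C : ℝ) (hC : 0 < C) (tδ : ℕ) :
    ∃ C' : ℝ, 0 < C' ∧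
      ∀ (T n : ℕ), 2 ≤ T → 1 ≤ n →
        ∀ (Δ a : ℕ → ℝ),
          (∀ t : ℕ, 1 ≤ t → t ≤ T → tδ ≤ t →
            (1 / Real.sqrt t) * Δ t ≤ (1 / 2) * (a t - a (t + 1) + C * n / t)) →
          (∀ t : ℕ, 0 ≤ a t ∧ a t ≤ C * n) →
          (∀ t : ℕ, t < tδ → Δ t ≤ C * n) →
          ∑ t ∈ Finset.Icc 1 T,
              ((t : ℝ) ^ (-(1 : ℝ) / 2) / ∑ s ∈ Finset.Icc 1 T, (s : ℝ) ^ (-(1 : ℝ) / 2)) * Δ t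
            ≤ C' * n * Real.log T / Real.sqrt T := by
  refine ⟨C * (2 * tδ + 3), by positivity, ?_⟩
  intro T n hT hn Δ a hstep ha hsmall
  have hTpos : (0:ℝ) < T := by exact_mod_cast Nat.lt_of_lt_of_le (by norm_num) hT
  have hsqT : 0 < Real.sqrt T := Real.sqrt_pos.mpr hTpos
  have hCn : (0:ℝ) ≤ C * n := by positivity
  -- log T ≥ 1/2
  have hlog : (1:ℝ)/2 ≤ Real.log T := by
    have h2 : (2:ℝ) ≤ T := by exact_mod_cast hT
    have := Real.log_le_log (by norm_num) h2
    linarith [Real.log_two_gt_d9]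
  set S := ∑ s ∈ Finset.Icc 1 T, (s : ℝ) ^ (-(1 : ℝ) / 2) with hSdef
  -- S ≥ √T
  have hS : Real.sqrt T ≤ S := by
    have : ∀ s ∈ Finset.Icc 1 T, 1 / Real.sqrt T ≤ (s:ℝ) ^ (-(1:ℝ)/2) := by
      intro s hs
      rw [rpow_neg_half]
      rw [Finset.mem_Icc] at hs
      have h1 : (0:ℝ) < Real.sqrt s := Real.sqrt_pos.mpr (by exact_mod_cast hs.1)
      apply one_div_le_one_div_of_le h1
      exact Real.sqrt_le_sqrt (by exact_mod_cast hs.2)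
    calc Real.sqrt T = (T : ℝ) * (1 / Real.sqrt T) := by
          rw [mul_one_div, Real.div_sqrt]
      _ = ∑ _s ∈ Finset.Icc 1 T, (1 / Real.sqrt T) := by
          rw [Finset.sum_const, Nat.card_Icc]
          simp [nsmul_eq_mul]
      _ ≤ S := Finset.sum_le_sum this
  set N := ∑ t ∈ Finset.Icc 1 T, (t : ℝ) ^ (-(1 : ℝ) / 2) * Δ t with hNdef
  have hsum : ∑ t ∈ Finset.Icc 1 T,
      ((t : ℝ) ^ (-(1 : ℝ) / 2) / S) * Δ t = N / S := by
    rw [hNdef, Finset.sum_div]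
    exact Finset.sum_congr rfl fun t _ => by ring
  -- bound N
  have hNle : N ≤ C * (2 * tδ + 3) * n * Real.log T := by
    have hsplit := Finset.sum_filter_add_sum_filter_not (Finset.Icc 1 T)
      (fun t => t < tδ) (fun t => (t : ℝ) ^ (-(1 : ℝ) / 2) * Δ t)
    -- small part
    have hsmallsum : ∑ t ∈ (Finset.Icc 1 T).filter (fun t => t < tδ),
        (t : ℝ) ^ (-(1 : ℝ) / 2) * Δ t ≤ tδ * (C * n) := by
      have hcard : ((Finset.Icc 1 T).filter (fun t => t < tδ)).card ≤ tδ := by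
        have hsub : (Finset.Icc 1 T).filter (fun t => t < tδ) ⊆ Finset.Ico 1 tδ := by
          intro t ht
          simp only [Finset.mem_filter, Finset.mem_Icc] at ht
          simp only [Finset.mem_Ico]
          omega
        calc _ ≤ (Finset.Ico 1 tδ).card := Finset.card_le_card hsub
          _ ≤ tδ := by rw [Nat.card_Ico]; omega
      have hterm : ∀ t ∈ (Finset.Icc 1 T).filter (fun t => t < tδ),
          (t : ℝ) ^ (-(1 : ℝ) / 2) * Δ t ≤ C * n := by
        intro t ht
        simp only [Finset.mem_filter, Finset.mem_Icc] at ht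
        have h1 : (1:ℝ) ≤ Real.sqrt t := by
          rw [show (1:ℝ) = Real.sqrt 1 by simp]
          exact Real.sqrt_le_sqrt (by exact_mod_cast ht.1.1)
        have hpos : (0:ℝ) < (t:ℝ) ^ (-(1:ℝ)/2) := by
          rw [rpow_neg_half]; positivity
        have hle1 : (t:ℝ) ^ (-(1:ℝ)/2) ≤ 1 := by
          rw [rpow_neg_half]
          exact div_le_one_of_le₀ h1 (by positivity)
        calc (t : ℝ) ^ (-(1 : ℝ) / 2) * Δ t
            ≤ (t : ℝ) ^ (-(1 : ℝ) / 2) * (C * n) :=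
              mul_le_mul_of_nonneg_left (hsmall t ht.2) hpos.le
          _ ≤ 1 * (C * n) := mul_le_mul_of_nonneg_right hle1 hCn
          _ = C * n := one_mul _
      calc _ ≤ ((Finset.Icc 1 T).filter (fun t => t < tδ)).card • (C * n) :=
            Finset.sum_le_card_nsmul _ _ _ hterm
        _ = (((Finset.Icc 1 T).filter (fun t => t < tδ)).card : ℝ) * (C * n) := by
            rw [nsmul_eq_mul]
        _ ≤ tδ * (C * n) := by
            apply mul_le_mul_of_nonneg_right _ hCn
            exact_mod_cast hcard
    -- big part
    have hbigset : (Finset.Icc 1 T).filter (fun t => ¬ t < tδ) = Finset.Icc (max 1 tδ) T := by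
      ext t
      simp only [Finset.mem_filter, Finset.mem_Icc, not_lt]
      omega
    set t0 := max 1 tδ with ht0
    have hbigsum : ∑ t ∈ (Finset.Icc 1 T).filter (fun t => ¬ t < tδ),
        (t : ℝ) ^ (-(1 : ℝ) / 2) * Δ t ≤ (1/2) * (C * n) + (1/2) * (C * n * (1 + Real.log T)) := by
      rw [hbigset]
      have hstep' : ∀ t ∈ Finset.Icc t0 T, (t : ℝ) ^ (-(1 : ℝ) / 2) * Δ t ≤
          (1/2) * (a t - a (t+1)) + (1/2) * (C * n / t) := by
        intro t ht
        rw [Finset.mem_Icc] at ht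
        have h1 : 1 ≤ t := le_trans (le_max_left 1 tδ) ht.1
        have h2 : tδ ≤ t := le_trans (le_max_right 1 tδ) ht.1
        have := hstep t h1 ht.2 h2
        rw [rpow_neg_half]
        linarith
      calc ∑ t ∈ Finset.Icc t0 T, (t : ℝ) ^ (-(1 : ℝ) / 2) * Δ t
          ≤ ∑ t ∈ Finset.Icc t0 T, ((1/2) * (a t - a (t+1)) + (1/2) * (C * n / t)) :=
            Finset.sum_le_sum hstep'
        _ = (1/2) * (∑ t ∈ Finset.Icc t0 T, (a t - a (t+1)))
            + (1/2) * (∑ t ∈ Finset.Icc t0 T, C * n / t) := by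
            rw [Finset.sum_add_distrib, Finset.mul_sum, Finset.mul_sum]
        _ ≤ (1/2) * (C * n) + (1/2) * (C * n * (1 + Real.log T)) := by
            have htel : ∑ t ∈ Finset.Icc t0 T, (a t - a (t+1)) ≤ C * n := by
              rw [← Finset.Ico_add_one_right_eq_Icc, Finset.sum_Ico_eq_sum_range]
              have heq : ∀ i, a (t0 + i) - a (t0 + i + 1) = a (t0 + i) - a (t0 + (i+1)) := by
                intro i; rw [← add_assoc]
              simp_rw [heq]
              rw [Finset.sum_range_sub' (fun i => a (t0 + i))]
              simp only [add_zero]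
              exact sub_le_iff_le_add.mpr
                (le_trans (ha t0).2 (le_add_of_nonneg_right (ha _).1))
            have hharm : ∑ t ∈ Finset.Icc t0 T, C * n / t ≤ C * n * (1 + Real.log T) := by
              calc ∑ t ∈ Finset.Icc t0 T, C * n / t
                  ≤ ∑ t ∈ Finset.Icc 1 T, C * n / t := by
                    apply Finset.sum_le_sum_of_subset_of_nonneg
                    · apply Finset.Icc_subset_Icc_left (le_max_left 1 tδ)
                    · intro t _ _; positivity
                _ = C * n * ∑ t ∈ Finset.Icc 1 T, (1:ℝ)/t := by
                    rw [Finset.mul_sum]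
                    exact Finset.sum_congr rfl fun t _ => by ring
                _ ≤ C * n * (1 + Real.log T) :=
                    mul_le_mul_of_nonneg_left (harm_le T) hCn
            linarith
    have hN : N = _ + _ := hsplit.symm
    rw [hNdef, ← hsplit]
    have hlogpos : (0:ℝ) ≤ Real.log T := by linarith
    nlinarith [hsmallsum, hbigsum, mul_le_mul_of_nonneg_left hlog hCn,
      mul_le_mul_of_nonneg_left hlog (mul_nonneg (Nat.cast_nonneg tδ) hCn)]
  rw [hsum]
  have hM : (0:ℝ) ≤ C * (2 * tδ + 3) * n * Real.log T := by positivity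
  exact div_le_div₀ hM hNle hsqT hS
end
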